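/- Let (C₁, A₁) and (C₂, A₂) be two quantum linear systems (A_i ∈ ℂ^{2n_i×2n_i}, C_i ∈ ℂ^{2m×2n_i}) satisfying the physical realizability conditions A_i + A_i♭ + C_i♭ C_i = 0, with all eigenvalues of each A_i having strictly negative real part, and each pair controllable in the sense that every left-eigenvector v of A_i satisfies v C_i♭ ≠ 0. Then the series-product system with A = [[A₁, 0], [-C₂♭ C₁, A₂]] and C = [C₁ C₂] is controllable: every left-eigenvector (y₁, y₂) of A satisfies y₁ C₁♭ + y₂ C₂♭ ≠ 0. -/

import Mathlib

noncomputable section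
open Matrix

def Jmat (k : ℕ) : Matrix (Fin k ⊕ Fin k) (Fin k ⊕ Fin k) ℂ :=
  Matrix.fromBlocks 1 0 0 (-1)

/-- Symplectic adjoint of a `2m × 2n` coupling matrix. -/
def cflat (m k : ℕ) (C : Matrix (Fin m ⊕ Fin m) (Fin k ⊕ Fin k) ℂ) :
    Matrix (Fin k ⊕ Fin k) (Fin m ⊕ Fin m) ℂ :=
  Jmat k * Cᴴ * Jmat m

lemma Jmat_mul_Jmat (k : ℕ) : Jmat k * Jmat k = 1 := by
  simp [Jmat, Matrix.fromBlocks_multiply, ← Matrix.fromBlocks_one]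

lemma mem_spec_of_left_eig {n : Type*} [Fintype n] [DecidableEq n]
    (M : Matrix n n ℂ) (v : n → ℂ) (l : ℂ) (hv : v ≠ 0)
    (h : Matrix.vecMul v M = l • v) : l ∈ spectrum ℂ M := by
  rw [spectrum.mem_iff]
  intro hU
  rw [Matrix.isUnit_iff_isUnit_det] at hU
  have h0 : ((algebraMap ℂ (Matrix n n ℂ) l - M)ᵀ).det = 0 := by
    rw [← Matrix.exists_mulVec_eq_zero_iff]
    refine ⟨v, hv, ?_⟩
    have ht : (algebraMap ℂ (Matrix n n ℂ) l - M)ᵀ = l • 1 - Mᵀ := by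
      rw [Algebra.algebraMap_eq_smul_one, Matrix.transpose_sub, Matrix.transpose_smul,
        Matrix.transpose_one]
    rw [ht, Matrix.sub_mulVec, Matrix.mulVec_transpose, h]
    simp [Matrix.smul_mulVec]
  rw [Matrix.det_transpose] at h0
  rw [h0] at hU
  exact hU.ne_zero rfl

lemma conj_mem_spec {k : ℕ} (M : Matrix (Fin k ⊕ Fin k) (Fin k ⊕ Fin k) ℂ) (x : ℂ)
    (h : x ∈ spectrum ℂ (Jmat k * Mᴴ * Jmat k)) :
    (starRingEnd ℂ) x ∈ spectrum ℂ M := by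
  rw [spectrum.mem_iff] at h ⊢
  intro hU
  apply h
  rw [Matrix.isUnit_iff_isUnit_det] at hU ⊢
  have key : algebraMap ℂ _ x - Jmat k * Mᴴ * Jmat k
      = Jmat k * (algebraMap ℂ _ ((starRingEnd ℂ) x) - M)ᴴ * Jmat k := by
    rw [Matrix.conjTranspose_sub, Matrix.mul_sub, Matrix.sub_mul]
    congr 1
    · rw [Algebra.algebraMap_eq_smul_one, Algebra.algebraMap_eq_smul_one]
      rw [Matrix.conjTranspose_smul, Matrix.conjTranspose_one]
      simp [Matrix.mul_smul, Matrix.smul_mul, Jmat_mul_Jmat]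
  rw [key, Matrix.det_mul, Matrix.det_mul, Matrix.det_conjTranspose]
  have hJ : IsUnit ((Jmat k).det) := by
    have := Matrix.det_mul (Jmat k) (Jmat k)
    rw [Jmat_mul_Jmat, Matrix.det_one] at this
    exact IsUnit.of_mul_eq_one _ this.symm
  exact (hJ.mul ((isUnit_star.mpr hU))).mul hJ

theorem stmt7 (n₁ n₂ m : ℕ)
    (A₁ : Matrix (Fin n₁ ⊕ Fin n₁) (Fin n₁ ⊕ Fin n₁) ℂ)
    (C₁ : Matrix (Fin m ⊕ Fin m) (Fin n₁ ⊕ Fin n₁) ℂ)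
    (A₂ : Matrix (Fin n₂ ⊕ Fin n₂) (Fin n₂ ⊕ Fin n₂) ℂ)
    (C₂ : Matrix (Fin m ⊕ Fin m) (Fin n₂ ⊕ Fin n₂) ℂ)
    (hPR₁ : A₁ + Jmat n₁ * A₁ᴴ * Jmat n₁ + cflat m n₁ C₁ * C₁ = 0)
    (hPR₂ : A₂ + Jmat n₂ * A₂ᴴ * Jmat n₂ + cflat m n₂ C₂ * C₂ = 0)
    (hHur₁ : ∀ μ ∈ spectrum ℂ A₁, μ.re < 0)
    (hHur₂ : ∀ μ ∈ spectrum ℂ A₂, μ.re < 0)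
    (hctrl₁ : ∀ (v : Fin n₁ ⊕ Fin n₁ → ℂ) (l : ℂ), v ≠ 0 →
      Matrix.vecMul v A₁ = l • v → Matrix.vecMul v (cflat m n₁ C₁) ≠ 0)
    (hctrl₂ : ∀ (v : Fin n₂ ⊕ Fin n₂ → ℂ) (l : ℂ), v ≠ 0 →
      Matrix.vecMul v A₂ = l • v → Matrix.vecMul v (cflat m n₂ C₂) ≠ 0) :
    ∀ (y : (Fin n₁ ⊕ Fin n₁) ⊕ (Fin n₂ ⊕ Fin n₂) → ℂ) (l : ℂ), y ≠ 0 →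
      Matrix.vecMul y (Matrix.fromBlocks A₁ 0 (-(cflat m n₂ C₂ * C₁)) A₂) = l • y →
      Matrix.vecMul (fun i => y (Sum.inl i)) (cflat m n₁ C₁)
        + Matrix.vecMul (fun i => y (Sum.inr i)) (cflat m n₂ C₂) ≠ 0 := by
  intro y l hy h hC0
  set y₁ : Fin n₁ ⊕ Fin n₁ → ℂ := fun i => y (Sum.inl i) with hy₁def
  set y₂ : Fin n₂ ⊕ Fin n₂ → ℂ := fun i => y (Sum.inr i) with hy₂def
  rw [Matrix.vecMul_fromBlocks] at h
  have h1 : Matrix.vecMul y₁ A₁ + Matrix.vecMul y₂ (-(cflat m n₂ C₂ * C₁)) = l • y₁ := by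
    funext i; exact congrFun h (Sum.inl i)
  have h2 : Matrix.vecMul y₂ A₂ = l • y₂ := by
    have := fun i => congrFun h (Sum.inr i)
    funext i
    have hi := this i
    simp [Matrix.vecMul_zero] at hi
    exact hi
  by_cases hy2 : y₂ = 0
  · have hy1 : y₁ ≠ 0 := by
      intro hy1
      apply hy
      funext i
      cases i with
      | inl i => exact congrFun hy1 i
      | inr i => exact congrFun hy2 i
    have hA1 : Matrix.vecMul y₁ A₁ = l • y₁ := by
      rw [hy2] at h1; simpa [Matrix.zero_vecMul] using h1
    apply hctrl₁ y₁ l hy1 hA1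
    rw [hy2] at hC0
    simpa [Matrix.zero_vecMul] using hC0
  · have hl2 : l ∈ spectrum ℂ A₂ := mem_spec_of_left_eig A₂ y₂ l hy2 h2
    have hlre : l.re < 0 := hHur₂ l hl2
    by_cases hy1 : y₁ = 0
    · apply hctrl₂ y₂ l hy2 h2
      rw [hy1] at hC0
      simpa [Matrix.zero_vecMul] using hC0
    · -- y₁ ᵥ* cflat₁ = -(y₂ ᵥ* cflat₂)
      have hCrel : Matrix.vecMul y₂ (cflat m n₂ C₂) = -(Matrix.vecMul y₁ (cflat m n₁ C₁)) := by
        rw [eq_neg_iff_add_eq_zero, add_comm]; exact hC0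
      have hkey : Matrix.vecMul y₁ (A₁ + cflat m n₁ C₁ * C₁) = l • y₁ := by
        rw [Matrix.vecMul_add, ← Matrix.vecMul_vecMul]
        have : Matrix.vecMul y₂ (-(cflat m n₂ C₂ * C₁))
            = Matrix.vecMul (Matrix.vecMul y₁ (cflat m n₁ C₁)) C₁ := by
          rw [Matrix.vecMul_neg, ← Matrix.vecMul_vecMul, hCrel]
          simp [Matrix.neg_vecMul]
        rw [← this]; exact h1
      have hPR' : A₁ + cflat m n₁ C₁ * C₁ = -(Jmat n₁ * A₁ᴴ * Jmat n₁) := by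
        rw [eq_neg_iff_add_eq_zero, ← hPR₁]
        abel
      have heig : Matrix.vecMul y₁ (Jmat n₁ * A₁ᴴ * Jmat n₁) = (-l) • y₁ := by
        rw [← neg_neg (Jmat n₁ * A₁ᴴ * Jmat n₁), ← hPR', Matrix.vecMul_neg, hkey]
        simp
      have hspec := mem_spec_of_left_eig _ y₁ (-l) hy1 heig
      have := hHur₁ _ (conj_mem_spec A₁ (-l) hspec)
      simp at this
      linarith
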